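/- Let B ⊆ kQ be an admissible subcoalgebra homogeneous with respect to the G-grading determined by a connected arrow weighting δ: Q₁ → G, and let B ⋊ kG ⊆ kQ ⋊ kG be the span of elements b ⋊ g with b ∈ B homogeneous and g ∈ G. Then B ⋊ kG is a subcoalgebra of kQ ⋊ kG, and the projection F(b ⋊ g) = b restricts to a surjective coalgebra homomorphism B ⋊ kG → B. -/

import Mathlib

open TensorProduct Quiver

noncomputable section
open scoped Classical

universe u v

variable (k : Type*) [Field k]

/-- The set of all paths in a quiver, with endpoints bundled. -/
abbrev PathsIn (V : Type u) [Quiver.{v + 1} V] : Type (max u (v + 1)) := Σ a b : V, Quiver.Path a b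

/-- The underlying vector space of the path coalgebra: the free `k`-module on paths. -/
abbrev PathCoalg (V : Type u) [Quiver.{v + 1} V] : Type _ := PathsIn V →₀ k

variable {V : Type u} [Quiver.{v + 1} V]

/-- The basis vector corresponding to a path. -/
def ιp (t : PathsIn V) : PathCoalg k V := Finsupp.single t 1

/-- The linear map on the path coalgebra induced by appending the arrow `e` to
paths ending at the source of `e` (and killing all other paths). -/
def consMap {b c : V} (e : b ⟶ c) : PathCoalg k V →ₗ[k] PathCoalg k V :=
  Finsupp.lsum k fun t =>
    if h : t.2.1 = b then Finsupp.lsingle ⟨t.1, c, (h ▸ t.2.2).cons e⟩ else 0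

/-- Comultiplication on basis paths:
`Δ(p) = Σ_{p = p₂p₁} p₂ ⊗ p₁ + t(p) ⊗ p + p ⊗ s(p)`, i.e. the sum of
`(second segment) ⊗ (first segment)` over all (possibly trivial) decompositions. -/
def deltaAux : ∀ {a b : V}, Quiver.Path a b → PathCoalg k V ⊗[k] PathCoalg k V
  | a, _, .nil => ιp k ⟨a, a, .nil⟩ ⊗ₜ[k] ιp k ⟨a, a, .nil⟩
  | a, c, .cons p e =>
      ιp k ⟨c, c, .nil⟩ ⊗ₜ[k] ιp k ⟨a, c, p.cons e⟩
      + TensorProduct.map (consMap k e) LinearMap.id (deltaAux p)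

/-- The comultiplication of the path coalgebra. -/
def ΔP : PathCoalg k V →ₗ[k] PathCoalg k V ⊗[k] PathCoalg k V :=
  Finsupp.lsum k fun t => LinearMap.toSpanSingleton k _ (deltaAux k t.2.2)

/-- The counit of the path coalgebra: `ε(p) = δ_{|p|,0}`. -/
def εP : PathCoalg k V →ₗ[k] k :=
  Finsupp.lsum k fun t => if t.2.2.length = 0 then LinearMap.id else 0

variable {G : Type*} [Group G]

/-- The multiplicative extension of an arrow weighting `δ : Q₁ → G` to paths:
`δ(a_n ⋯ a_1) = δ(a_n) ⋯ δ(a_1)`, with value `1` on length-zero paths. -/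
def wt (δ : ∀ {a b : V}, (a ⟶ b) → G) : ∀ {a b : V}, Quiver.Path a b → G
  | _, _, .nil => 1
  | _, _, .cons p e => δ e * wt @δ p

/-- The subspace of a tensor product spanned by elementary tensors from two
given submodules; this plays the role of `A ⊗ B` inside `M ⊗ N`. -/
def tsub {M N : Type*} [AddCommGroup M] [Module k M] [AddCommGroup N] [Module k N]
    (A : Submodule k M) (B : Submodule k N) : Submodule k (M ⊗[k] N) :=
  Submodule.span k {x | ∃ a ∈ A, ∃ b ∈ B, x = a ⊗ₜ[k] b}

/-- The underlying vector space of the smash coproduct coalgebra `kQ ⋊ kG`: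
the free `k`-module on symbols `p ⋊ g`. -/
abbrev SmashCoalg (V : Type u) [Quiver.{v + 1} V] (G : Type*) : Type _ :=
  (PathsIn V × G) →₀ k

/-- The basis vector `p ⋊ g`. -/
def ιs (t : PathsIn V × G) : SmashCoalg k V G := Finsupp.single t 1

/-- Appending the arrow `e` to the path component of basis vectors `p ⋊ g`
(for `p` ending at the source of `e`), leaving the group component unchanged. -/
def consMapS {b c : V} (e : b ⟶ c) : SmashCoalg k V G →ₗ[k] SmashCoalg k V G :=
  Finsupp.lsum k fun t =>
    if h : t.1.2.1 = b then Finsupp.lsingle (⟨t.1.1, c, (h ▸ t.1.2.2).cons e⟩, t.2) else 0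

/-- The value of the smash comultiplication on the basis vector `p ⋊ g`:
`Δ(p ⋊ g) = Σ_{p = rq} (r ⋊ δ(q)g) ⊗ (q ⋊ g)`, where `q` runs over initial
segments of `p` (including the trivial decompositions). -/
def smashDeltaAux (δ : ∀ {a b : V}, (a ⟶ b) → G) (g : G) :
    ∀ {a b : V}, Quiver.Path a b → SmashCoalg k V G ⊗[k] SmashCoalg k V G
  | a, _, .nil => ιs k (⟨a, a, .nil⟩, g) ⊗ₜ[k] ιs k (⟨a, a, .nil⟩, g)
  | a, c, .cons p e =>
      ιs k (⟨c, c, .nil⟩, wt @δ (p.cons e) * g) ⊗ₜ[k] ιs k (⟨a, c, p.cons e⟩, g)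
      + TensorProduct.map (consMapS k e) LinearMap.id (smashDeltaAux @δ g p)

/-- The comultiplication of the smash coproduct coalgebra `kQ ⋊ kG`. -/
def smashDelta (δ : ∀ {a b : V}, (a ⟶ b) → G) :
    SmashCoalg k V G →ₗ[k] SmashCoalg k V G ⊗[k] SmashCoalg k V G :=
  Finsupp.lsum k fun t => LinearMap.toSpanSingleton k _ (smashDeltaAux k @δ t.2 t.1.2.2)

/-- The counit of `kQ ⋊ kG`: `ε(p ⋊ g) = δ_{|p|,0}`. -/
def smashEps : SmashCoalg k V G →ₗ[k] k :=
  Finsupp.lsum k fun t => if t.1.2.2.length = 0 then LinearMap.id else 0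

/-- The canonical projection `kQ ⋊ kG → kQ`, `p ⋊ g ↦ p`. -/
def smashProj : SmashCoalg k V G →ₗ[k] PathCoalg k V :=
  Finsupp.lsum k fun t => Finsupp.lsingle t.1

/-- The linear embedding `kQ → kQ ⋊ kG`, `b ↦ b ⋊ g`. -/
def embG (g : G) : PathCoalg k V →ₗ[k] SmashCoalg k V G :=
  Finsupp.lsum k fun t => Finsupp.lsingle (t, g)

/-- The weight of a walk (a path in the symmetrification of `Q`):
arrows contribute their weight and reversed arrows the inverse weight. -/
def wtWalk (δ : ∀ {a b : V}, (a ⟶ b) → G) :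
    ∀ {a b : Quiver.Symmetrify V}, Quiver.Path a b → G
  | _, _, .nil => 1
  | _, _, .cons p e =>
      (Sum.elim (fun f => δ f) (fun f => (δ f)⁻¹) e) * wtWalk @δ p

/-- The subspace `B ⋊ kG ⊆ kQ ⋊ kG`: the span of the elements `b ⋊ g` with
`b ∈ B` homogeneous and `g ∈ G`. -/
def BsmashG (δ : ∀ {a b : V}, (a ⟶ b) → G) (B : Submodule k (PathCoalg k V)) :
    Submodule k (SmashCoalg k V G) :=
  Submodule.span k
    {z | ∃ (g gg : G) (b : PathCoalg k V), b ∈ B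
      ∧ (∀ t ∈ b.support, wt @δ t.2.2 = gg) ∧ z = embG k g b}

section Aux

variable {G : Type*} [Group G]

/-- Bilinear refinement map `r ⊗ q ↦ (r ⋊ wt(q)g) ⊗ (q ⋊ g)`. -/
def Phi (δ : ∀ {a b : V}, (a ⟶ b) → G) (g : G) :
    PathCoalg k V ⊗[k] PathCoalg k V →ₗ[k] SmashCoalg k V G ⊗[k] SmashCoalg k V G :=
  TensorProduct.lift (Finsupp.lsum k fun r => LinearMap.toSpanSingleton k _
    (Finsupp.lsum k fun q => LinearMap.toSpanSingleton k _
      (ιs k (r, wt @δ q.2.2 * g) ⊗ₜ[k] ιs k (q, g))))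

lemma Phi_single (δ : ∀ {a b : V}, (a ⟶ b) → G) (g : G) (r q : PathsIn V) :
    Phi k @δ g (ιp k r ⊗ₜ[k] ιp k q) = ιs k (r, wt @δ q.2.2 * g) ⊗ₜ[k] ιs k (q, g) := by
  simp [Phi, ιp, TensorProduct.lift.tmul, Finsupp.lsum_single,
    LinearMap.toSpanSingleton_apply]

end Aux
section Aux2

variable {G : Type*} [Group G]

lemma embG_single (g : G) (t : PathsIn V) :
    embG k g (ιp k t) = ιs k (t, g) := by
  simp [embG, ιp, ιs, Finsupp.lsum_single]

lemma smashProj_embG (g : G) (b : PathCoalg k V) :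
    smashProj k (embG k g b) = b := by
  have : (smashProj k (G := G)).comp (embG k g (V := V)) = LinearMap.id := by
    apply Finsupp.lhom_ext
    intro t c
    simp [embG, smashProj, Finsupp.lsum_single]
  calc smashProj k (embG k g b) = ((smashProj k (G := G)).comp (embG k g (V := V))) b := rfl
    _ = b := by rw [this]; rfl

lemma DeltaP_single (t : PathsIn V) : ΔP k (ιp k t) = deltaAux k t.2.2 := by
  simp [ΔP, ιp, Finsupp.lsum_single, LinearMap.toSpanSingleton_apply]

lemma smashDelta_single (δ : ∀ {a b : V}, (a ⟶ b) → G) (g : G) (t : PathsIn V) :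
    smashDelta k @δ (ιs k (t, g)) = smashDeltaAux k @δ g t.2.2 := by
  simp [smashDelta, ιs, Finsupp.lsum_single, LinearMap.toSpanSingleton_apply]

lemma Phi_consMap (δ : ∀ {a b : V}, (a ⟶ b) → G) (g : G) {b c : V} (e : b ⟶ c)
    (x : PathCoalg k V ⊗[k] PathCoalg k V) :
    Phi k @δ g (TensorProduct.map (consMap k e) LinearMap.id x)
      = TensorProduct.map (consMapS k e) LinearMap.id (Phi k @δ g x) := by
  have : (Phi k @δ g (G := G)).comp (TensorProduct.map (consMap k e) LinearMap.id)
      = (TensorProduct.map (consMapS k e) LinearMap.id).comp (Phi k @δ g) := by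
    apply TensorProduct.ext
    apply Finsupp.lhom_ext
    intro r cr
    apply Finsupp.lhom_ext
    intro q cq
    simp only [LinearMap.compr₂_apply, LinearMap.compr₂ₛₗ_apply, TensorProduct.mk_apply, LinearMap.comp_apply,
      TensorProduct.map_tmul, LinearMap.id_apply]
    have h1 : Finsupp.single r cr = cr • ιp k r := by simp [ιp, Finsupp.smul_single]
    have h2 : Finsupp.single q cq = cq • ιp k q := by simp [ιp, Finsupp.smul_single]
    rw [h1, h2]
    by_cases h : r.2.1 = b
    · have hc : consMap k e (ιp k r) = ιp k ⟨r.1, c, (h ▸ r.2.2).cons e⟩ := by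
        simp [consMap, ιp, Finsupp.lsum_single, h]
      have hcs : consMapS k e (ιs k (r, wt @δ q.2.2 * g))
          = ιs k (⟨r.1, c, (h ▸ r.2.2).cons e⟩, wt @δ q.2.2 * g) := by
        simp [consMapS, ιs, Finsupp.lsum_single, h]
      simp only [map_smul, LinearMap.map_smul₂, ← TensorProduct.smul_tmul',
        TensorProduct.tmul_smul, map_smul, hc]
      rw [Phi_single, Phi_single]
      simp only [map_smul, TensorProduct.map_tmul, LinearMap.id_apply, hcs]
    · have hc : consMap k e (ιp k r) = 0 := by
        simp [consMap, ιp, Finsupp.lsum_single, h]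
      have hcs : consMapS k e (ιs k (r, wt @δ q.2.2 * g)) = 0 := by
        simp [consMapS, ιs, Finsupp.lsum_single, h]
      simp only [map_smul, ← TensorProduct.smul_tmul', TensorProduct.tmul_smul, hc]
      rw [Phi_single]
      simp only [TensorProduct.zero_tmul, map_zero, smul_zero, TensorProduct.map_tmul,
        LinearMap.id_apply, hcs]
  exact LinearMap.congr_fun this x

end Aux2
section Aux3

variable {G : Type*} [Group G]

lemma smashDeltaAux_eq_Phi (δ : ∀ {a b : V}, (a ⟶ b) → G) (g : G) :
    ∀ {a b : V} (p : Quiver.Path a b),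
      smashDeltaAux k @δ g p = Phi k @δ g (deltaAux k p)
  | _, _, .nil => by
      rw [smashDeltaAux, deltaAux, Phi_single]
      simp [wt]
  | a, c, .cons p e => by
      rw [smashDeltaAux, deltaAux, map_add, Phi_single, Phi_consMap,
        ← smashDeltaAux_eq_Phi @δ g p]

lemma smashDelta_embG (δ : ∀ {a b : V}, (a ⟶ b) → G) (g : G) (b : PathCoalg k V) :
    smashDelta k @δ (embG k g b) = Phi k @δ g (ΔP k b) := by
  have : (smashDelta k @δ).comp (embG k g (V := V))
      = (Phi k @δ g).comp (ΔP k) := by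
    apply Finsupp.lhom_ext
    intro t c
    have h1 : Finsupp.single t c = c • ιp k t := by simp [ιp, Finsupp.smul_single]
    simp only [LinearMap.comp_apply, h1, map_smul]
    rw [embG_single, smashDelta_single, DeltaP_single, smashDeltaAux_eq_Phi]
  exact LinearMap.congr_fun this b

lemma Phi_tmul_single (δ : ∀ {a b : V}, (a ⟶ b) → G) (g : G) (b : PathCoalg k V)
    (q : PathsIn V) :
    Phi k @δ g (b ⊗ₜ[k] ιp k q) = embG k (wt @δ q.2.2 * g) b ⊗ₜ[k] ιs k (q, g) := by
  induction b using Finsupp.induction_linear with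
  | zero => simp [TensorProduct.zero_tmul]
  | add x y hx hy =>
      simp only [TensorProduct.add_tmul, map_add, hx, hy]
  | single r c =>
      have h1 : Finsupp.single r c = c • ιp k r := by simp [ιp, Finsupp.smul_single]
      rw [h1]
      simp only [← TensorProduct.smul_tmul', map_smul]
      rw [Phi_single, embG_single]

lemma Phi_tmul_homog (δ : ∀ {a b : V}, (a ⟶ b) → G) (g h : G) (b c : PathCoalg k V)
    (hc : ∀ t ∈ c.support, wt @δ t.2.2 = h) :
    Phi k @δ g (b ⊗ₜ[k] c) = embG k (h * g) b ⊗ₜ[k] embG k g c := by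
  conv_lhs => rw [← Finsupp.sum_single c]
  rw [Finsupp.sum, TensorProduct.tmul_sum, map_sum]
  conv_rhs => rw [← Finsupp.sum_single c]
  rw [Finsupp.sum, map_sum, TensorProduct.tmul_sum]
  apply Finset.sum_congr rfl
  intro q hq
  have h1 : Finsupp.single q (c q) = (c q) • ιp k q := by simp [ιp, Finsupp.smul_single]
  rw [h1]
  simp only [TensorProduct.tmul_smul, map_smul]
  rw [Phi_tmul_single, embG_single, hc q hq]

end Aux3
section Aux4

variable {G : Type*} [Group G]

lemma filter_decomp (δ : ∀ {a b : V}, (a ⟶ b) → G) (x : PathCoalg k V) :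
    x = ∑ g ∈ x.support.image (fun t => wt @δ t.2.2),
      x.filter (fun t : PathsIn V => wt @δ t.2.2 = g) := by
  ext t
  rw [Finset.sum_apply']
  simp only [Finsupp.filter_apply]
  by_cases ht : x t = 0
  · simp [ht]
  · rw [Finset.sum_ite_eq (x.support.image (fun t => wt @δ t.2.2)) (wt @δ t.2.2)
      (fun _ => x t)]
    rw [if_pos (Finset.mem_image_of_mem _ (Finsupp.mem_support_iff.2 ht))]

lemma embG_mem (δ : ∀ {a b : V}, (a ⟶ b) → G) (B : Submodule k (PathCoalg k V))
    (hhom : ∀ x ∈ B, ∀ g : G, x.filter (fun t : PathsIn V => wt @δ t.2.2 = g) ∈ B)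
    (b : PathCoalg k V) (hb : b ∈ B) (g : G) :
    embG k g b ∈ BsmashG k @δ B := by
  rw [show embG k g b = embG k g (∑ h ∈ b.support.image (fun t => wt @δ t.2.2),
      b.filter (fun t : PathsIn V => wt @δ t.2.2 = h)) from by rw [← filter_decomp]]
  rw [map_sum]
  apply Submodule.sum_mem
  intro h _
  apply Submodule.subset_span
  refine ⟨g, h, _, hhom b hb h, ?_, rfl⟩
  intro t ht
  rw [Finsupp.support_filter, Finset.mem_filter] at ht
  exact ht.2

end Aux4
/-- If `B ⊆ kQ` is an admissible subcoalgebra, homogeneous for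
the `G`-grading determined by a connected arrow weighting `δ`, then `B ⋊ kG` is
a subcoalgebra of `kQ ⋊ kG` and the canonical projection `b ⋊ g ↦ b` restricts
to a surjective coalgebra homomorphism `B ⋊ kG → B`. -/
theorem homogeneous_subcoalgebra_smash (δ : ∀ {a b : V}, (a ⟶ b) → G)
    -- `δ` is connected
    (hconn : ∀ (x y : V) (g : G),
      ∃ w : Quiver.Path (Quiver.Symmetrify.of.obj x) (Quiver.Symmetrify.of.obj y),
        wtWalk @δ w = g)
    (B : Submodule k (PathCoalg k V))
    -- `B` is admissible
    (hvert : ∀ x : V, ιp k ⟨x, x, Quiver.Path.nil⟩ ∈ B)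
    (harr : ∀ (a c : V) (e : a ⟶ c), ιp k ⟨a, c, Quiver.Path.nil.cons e⟩ ∈ B)
    -- `B` is a subcoalgebra
    (hsub : ∀ x ∈ B, ΔP k x ∈ tsub k B B)
    -- `B` is homogeneous
    (hhom : ∀ x ∈ B, ∀ g : G, x.filter (fun t : PathsIn V => wt @δ t.2.2 = g) ∈ B) :
    -- `B ⋊ kG` is a subcoalgebra of `kQ ⋊ kG` ...
    (∀ x ∈ BsmashG k @δ B, smashDelta k @δ x ∈ tsub k (BsmashG k @δ B) (BsmashG k @δ B))
    -- ... and the (coalgebra) projection maps it onto `B`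
    ∧ Submodule.map (smashProj k (G := G)) (BsmashG k @δ B) = B := by
  have hPhiTsub : ∀ (g : G), ∀ y ∈ tsub k B B,
      Phi k @δ g y ∈ tsub k (BsmashG k @δ B) (BsmashG k @δ B) := by
    intro g y hy
    induction hy using Submodule.span_induction with
    | mem z hz =>
        obtain ⟨b, hb, c, hc, rfl⟩ := hz
        rw [show (b ⊗ₜ[k] c : PathCoalg k V ⊗[k] PathCoalg k V)
            = b ⊗ₜ[k] (∑ h ∈ c.support.image (fun t => wt @δ t.2.2),
              c.filter (fun t : PathsIn V => wt @δ t.2.2 = h)) from by rw [← filter_decomp]]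
        rw [TensorProduct.tmul_sum, map_sum]
        apply Submodule.sum_mem
        intro h _
        rw [Phi_tmul_homog k @δ g h b _ (fun t ht => by
          rw [Finsupp.support_filter, Finset.mem_filter] at ht; exact ht.2)]
        exact Submodule.subset_span
          ⟨embG k (h * g) b, embG_mem k @δ B hhom b hb _,
           embG k g _, embG_mem k @δ B hhom _ (hhom c hc h) g, rfl⟩
    | zero => simp only [map_zero]; exact Submodule.zero_mem _
    | add u v hu hv hu' hv' => rw [map_add]; exact Submodule.add_mem _ hu' hv'
    | smul a u hu hu' => rw [map_smul]; exact Submodule.smul_mem _ a hu'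
  constructor
  · intro x hx
    induction hx using Submodule.span_induction with
    | mem z hz =>
        obtain ⟨g, gg, b, hb, -, rfl⟩ := hz
        rw [smashDelta_embG]
        exact hPhiTsub g _ (hsub b hb)
    | zero => simp only [map_zero]; exact Submodule.zero_mem _
    | add u v hu hv hu' hv' => rw [map_add]; exact Submodule.add_mem _ hu' hv'
    | smul a u hu hu' => rw [map_smul]; exact Submodule.smul_mem _ a hu'
  · apply le_antisymm
    · rw [Submodule.map_le_iff_le_comap, BsmashG, Submodule.span_le]
      rintro z ⟨g, gg, b, hb, -, rfl⟩
      simpa [Submodule.mem_comap, smashProj_embG] using hb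
    · intro b hb
      exact ⟨embG k 1 b, embG_mem k @δ B hhom b hb 1, smashProj_embG k 1 b⟩
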